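/- Let 1 ≤ d ≤ m and 1 ≤ r ≤ m+1−d, and assume that n_{d+r−1}·n_{d−1}·(n_i + n_j − 1) ≤ n_i·n_j·(n_{d+r−1} + n_{d−1} − 1) for every pair of indices d ≤ i < j ≤ d+r−2 (a condition that is vacuous when r ≤ 2). Then for every set M ⊆ S_d(m) with |M| = r one has |∇_X(M)| ≥ ∏_{i=1}^{d−1}(n_i − 1) · ∏_{i=d+r}^{m} n_i · (∏_{i=d}^{d+r−1} n_i − 1). -/

import Mathlib

/-- Square-free exponent vectors of total degree `d` in `m` variables. -/
def Sd (m d : ℕ) : Set (Fin m → ℕ) := {a | (∀ i, a i ≤ 1) ∧ ∑ i, a i = d}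

/-- Square-free exponent vectors of total degree at most `d` in `m` variables. -/
def Sle (m d : ℕ) : Set (Fin m → ℕ) := {a | (∀ i, a i ≤ 1) ∧ ∑ i, a i ≤ d}

/-- Evaluation code over the Cartesian set `X = A 0 × ⋯ × A (m-1)`, spanned by the
evaluations of the monomials `x^a` for `a ∈ S`. -/
noncomputable def evalCodeX {F : Type*} [Field F] {m : ℕ} (A : Fin m → Finset F)
    (S : Set (Fin m → ℕ)) :
    Submodule F ({P : Fin m → F // ∀ i, P i ∈ A i} → F) :=
  Submodule.span F ((fun (a : Fin m → ℕ) (P : {P : Fin m → F // ∀ i, P i ∈ A i}) =>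
    ∏ i, P.1 i ^ a i) '' S)

open Classical in
/-- Support of a linear code. -/
noncomputable def codeSupp {F ι : Type*} [Field F] [Fintype ι]
    (C : Submodule F (ι → F)) : Finset ι :=
  Finset.univ.filter (fun i => ∃ c ∈ C, c i ≠ 0)

/-- The `r`-th generalized Hamming weight of a linear code: the minimum cardinality of the
support of an `r`-dimensional subcode. -/
noncomputable def GHW {F ι : Type*} [Field F] [Fintype ι]
    (C : Submodule F (ι → F)) (r : ℕ) : ℕ :=
  sInf {k | ∃ C' : Submodule F (ι → F),
    C' ≤ C ∧ Module.finrank F C' = r ∧ (codeSupp C').card = k}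

/-- The footprint box `B_X = {0,…,n_1−1} × ⋯ × {0,…,n_m−1}`. -/
noncomputable def BX {F : Type*} {m : ℕ} (A : Fin m → Finset F) : Finset (Fin m → ℕ) :=
  Fintype.piFinset (fun i => Finset.range (A i).card)

open Classical in
/-- The shadow `∇_X(N)`: elements of `B_X` divisible by some element of `N`. -/
noncomputable def nablaX {F : Type*} {m : ℕ} (A : Fin m → Finset F)
    (N : Set (Fin m → ℕ)) : Finset (Fin m → ℕ) :=
  (BX A).filter (fun b => ∃ a ∈ N, ∀ i, a i ≤ b i)

open Classical in
/-- The footprint `Δ_X(N) = B_X ∖ ∇_X(N)`. -/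
noncomputable def deltaX {F : Type*} {m : ℕ} (A : Fin m → Finset F)
    (N : Set (Fin m → ℕ)) : Finset (Fin m → ℕ) :=
  (BX A).filter (fun b => ¬ ∃ a ∈ N, ∀ i, a i ≤ b i)

/-- `nval A k` is the cardinality `n_k = |A_k|`, with the paper's 1-based indexing
(junk value `1` outside the range `1 ≤ k ≤ m`). -/
def nval {F : Type*} {m : ℕ} (A : Fin m → Finset F) (k : ℕ) : ℕ :=
  if h : 1 ≤ k ∧ k ≤ m then (A ⟨k - 1, by omega⟩).card else 1

namespace ShadowAux

open Finset

variable {m : ℕ}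

def shVec (i j : Fin m) (a : Fin m → ℕ) : Fin m → ℕ :=
  fun t => if t = i then 1 else if t = j then 0 else a t

def sVec (d : ℕ) (j : Fin m) : Fin m → ℕ :=
  fun t => if t.val + 1 < d ∨ t = j then 1 else 0

def Ok (d : ℕ) (G : Finset (Fin m → ℕ)) : Prop :=
  ∀ a ∈ G, (∀ t, a t ≤ 1) ∧ ∑ t, a t = d

def wt (a : Fin m → ℕ) : ℕ := ∑ t, t.val * a t

def wtF (G : Finset (Fin m → ℕ)) : ℕ := ∑ a ∈ G, wt a

def shOne (G : Finset (Fin m → ℕ)) (i j : Fin m) (a : Fin m → ℕ) : Fin m → ℕ :=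
  if a i = 0 ∧ a j = 1 ∧ shVec i j a ∉ G then shVec i j a else a

def shF (G : Finset (Fin m → ℕ)) (i j : Fin m) : Finset (Fin m → ℕ) :=
  G.image (shOne G i j)

def IsShifted (G : Finset (Fin m → ℕ)) : Prop :=
  ∀ i j : Fin m, i < j → ∀ a ∈ G, a i = 0 → a j = 1 → shVec i j a ∈ G

section Basic

variable {K : Type*} (A : Fin m → Finset K)

lemma mem_nabla {G : Finset (Fin m → ℕ)} {b : Fin m → ℕ} :
    b ∈ nablaX A ↑G ↔ (∀ i, b i < (A i).card) ∧ ∃ a ∈ G, ∀ t, a t ≤ b t := by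
  simp [nablaX, BX, Fintype.mem_piFinset, Finset.mem_filter, Finset.mem_range]

end Basic

/-- summation splitting helper -/
lemma sum_split (i j : Fin m) (hij : i ≠ j) (f : Fin m → ℕ) :
    ∑ t, f t = f i + f j + ∑ t ∈ (univ.erase i).erase j, f t := by
  have h1 : ∑ t, f t = f i + ∑ t ∈ univ.erase i, f t :=
    (Finset.add_sum_erase univ f (mem_univ i)).symm
  have h2 : ∑ t ∈ univ.erase i, f t = f j + ∑ t ∈ (univ.erase i).erase j, f t :=
    (Finset.add_sum_erase _ f (by simp [Finset.mem_erase, hij.symm])).symm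
  omega

lemma shVec_sum {i j : Fin m} (hij : i ≠ j) {a : Fin m → ℕ} (hai : a i = 0) (haj : a j = 1) :
    ∑ t, shVec i j a t = ∑ t, a t := by
  rw [sum_split i j hij (shVec i j a), sum_split i j hij a]
  have h1 : shVec i j a i = 1 := by simp [shVec]
  have h2 : shVec i j a j = 0 := by simp [shVec, hij.symm]
  have h3 : ∑ t ∈ (univ.erase i).erase j, shVec i j a t = ∑ t ∈ (univ.erase i).erase j, a t := by
    apply Finset.sum_congr rfl
    intro t ht
    simp only [Finset.mem_erase] at ht
    simp [shVec, ht.1, ht.2.1]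
  omega

lemma wt_shVec {i j : Fin m} (hij : i ≠ j) {a : Fin m → ℕ} (hai : a i = 0) (haj : a j = 1) :
    wt (shVec i j a) + j.val = wt a + i.val := by
  unfold wt
  rw [sum_split i j hij (fun t => t.val * shVec i j a t), sum_split i j hij (fun t => t.val * a t)]
  have h1 : shVec i j a i = 1 := by simp [shVec]
  have h2 : shVec i j a j = 0 := by simp [shVec, hij.symm]
  have h3 : ∑ t ∈ (univ.erase i).erase j, t.val * shVec i j a t
      = ∑ t ∈ (univ.erase i).erase j, t.val * a t := by
    apply Finset.sum_congr rfl
    intro t ht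
    simp only [Finset.mem_erase] at ht
    simp [shVec, ht.1, ht.2.1]
  simp only [h1, h2, hai, haj]
  omega

lemma shOne_injOn (G : Finset (Fin m → ℕ)) (i j : Fin m) :
    ∀ a ∈ G, ∀ b ∈ G, shOne G i j a = shOne G i j b → a = b := by
  intro a ha b hb hab
  unfold shOne at hab
  split_ifs at hab with h1 h2 h2
  · -- both shifted
    funext t
    have := congrFun hab t
    by_cases hti : t = i
    · subst hti; omega
    · by_cases htj : t = j
      · subst htj; omega
      · simpa [shVec, hti, htj] using this
  · -- a shifted, b not: shVec i j a = b ∈ G but shVec i j a ∉ G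
    exact absurd (hab ▸ hb) h1.2.2
  · exact absurd (hab ▸ ha) h2.2.2
  · exact hab

lemma card_shF (G : Finset (Fin m → ℕ)) (i j : Fin m) : (shF G i j).card = G.card :=
  Finset.card_image_of_injOn (fun a ha b hb => shOne_injOn G i j a ha b hb)

lemma ok_shF {d : ℕ} {G : Finset (Fin m → ℕ)} {i j : Fin m} (hij : i ≠ j) (hOk : Ok d G) :
    Ok d (shF G i j) := by
  intro a' ha'
  obtain ⟨a, ha, rfl⟩ := Finset.mem_image.mp ha'
  obtain ⟨h01, hsum⟩ := hOk a ha
  unfold shOne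
  split_ifs with h
  · constructor
    · intro t
      by_cases hti : t = i
      · simp [shVec, hti]
      · by_cases htj : t = j
        · subst htj; simp [shVec, hti]
        · simpa [shVec, hti, htj] using h01 t
    · rw [shVec_sum hij h.1 h.2.1]; exact hsum
  · exact ⟨h01, hsum⟩

lemma wtF_shF_lt {G : Finset (Fin m → ℕ)} {i j : Fin m} (hij : i < j)
    (hw : ∃ a ∈ G, a i = 0 ∧ a j = 1 ∧ shVec i j a ∉ G) :
    wtF (shF G i j) < wtF G := by
  have hine : (i : Fin m) ≠ j := ne_of_lt hij
  have hsum : wtF (shF G i j) = ∑ a ∈ G, wt (shOne G i j a) :=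
    Finset.sum_image (fun a ha b hb => shOne_injOn G i j a ha b hb)
  rw [hsum]
  obtain ⟨a₀, ha₀, h₀i, h₀j, h₀n⟩ := hw
  apply Finset.sum_lt_sum
  · intro a ha
    unfold shOne
    split_ifs with h
    · have := wt_shVec hine h.1 h.2.1
      have hij' : i.val < j.val := hij
      omega
    · exact le_refl _
  · refine ⟨a₀, ha₀, ?_⟩
    have hcond : a₀ i = 0 ∧ a₀ j = 1 ∧ shVec i j a₀ ∉ G := ⟨h₀i, h₀j, h₀n⟩
    unfold shOne
    rw [if_pos hcond]
    have := wt_shVec hine h₀i h₀j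
    have hij' : i.val < j.val := hij
    omega

end ShadowAux

namespace ShadowAux
open Finset
variable {m : ℕ}

def bswap (i j : Fin m) (b : Fin m → ℕ) : Fin m → ℕ :=
  fun t => if t = i then 0 else if t = j then b i else b t

section Shadow
variable {K : Type*} (A : Fin m → Finset K)

lemma key1 {d : ℕ} {G : Finset (Fin m → ℕ)} {i j : Fin m} (hij : i ≠ j) (hOk : Ok d G) :
    ∀ b ∈ nablaX A ↑(shF G i j), b ∉ nablaX A ↑G →
      1 ≤ b i ∧ b j = 0 ∧
        ∃ a ∈ G, a i = 0 ∧ a j = 1 ∧ shVec i j a ∉ G ∧ ∀ t, shVec i j a t ≤ b t := by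
  intro b hb hnb
  rw [mem_nabla] at hb
  obtain ⟨hbox, a', ha', hle⟩ := hb
  obtain ⟨a, ha, rfl⟩ := Finset.mem_image.mp ha'
  by_cases hc : a i = 0 ∧ a j = 1 ∧ shVec i j a ∉ G
  · rw [shOne, if_pos hc] at hle
    have hbi : 1 ≤ b i := by have := hle i; simpa [shVec] using this
    have hbj : b j = 0 := by
      by_contra hbj0
      apply hnb
      rw [mem_nabla]
      refine ⟨hbox, a, ha, fun t => ?_⟩
      by_cases hti : t = i
      · subst hti; omega
      · by_cases htj : t = j
        · subst htj; omega
        · have := hle t; simpa [shVec, hti, htj] using this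
    exact ⟨hbi, hbj, a, ha, hc.1, hc.2.1, hc.2.2, hle⟩
  · rw [shOne, if_neg hc] at hle
    exact absurd ((mem_nabla A).mpr ⟨hbox, a, ha, hle⟩) hnb

lemma key2 {d : ℕ} {G : Finset (Fin m → ℕ)} {i j : Fin m} (hij : i ≠ j)
    (hn0 : 0 < (A i).card) (hnm : (A i).card ≤ (A j).card) (hOk : Ok d G) :
    ∀ b ∈ nablaX A ↑(shF G i j), b ∉ nablaX A ↑G → bswap i j b ∈ nablaX A ↑G := by
  intro b hb hnb
  obtain ⟨hbi, hbj, a, ha, hai, haj, hsn, hale⟩ := key1 A hij hOk b hb hnb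
  have hbox : ∀ t, b t < (A t).card := ((mem_nabla A).mp hb).1
  rw [mem_nabla]
  constructor
  · intro t
    by_cases hti : t = i
    · subst hti; simpa [bswap] using hn0
    · by_cases htj : t = j
      · subst htj
        have h1 : b i < (A i).card := hbox i
        have h2 : bswap i t b t = b i := by simp [bswap, hti]
        rw [h2]
        omega
      · simpa [bswap, hti, htj] using hbox t
  · refine ⟨a, ha, fun t => ?_⟩
    by_cases hti : t = i
    · subst hti; simp [bswap, hai]
    · by_cases htj : t = j
      · subst htj
        have h2 : bswap i t b t = b i := by simp [bswap, hti]
        rw [h2]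
        omega
      · have := hale t; simp only [shVec, if_neg hti, if_neg htj] at this
        simpa [bswap, hti, htj] using this

lemma key3 {d : ℕ} {G : Finset (Fin m → ℕ)} {i j : Fin m} (hij : i ≠ j) (hOk : Ok d G) :
    ∀ b ∈ nablaX A ↑(shF G i j), b ∉ nablaX A ↑G → bswap i j b ∉ nablaX A ↑(shF G i j) := by
  intro b hb hnb hmem
  obtain ⟨hbi, hbj, a, ha, hai, haj, hsn, hale⟩ := key1 A hij hOk b hb hnb
  have hbox : ∀ t, b t < (A t).card := ((mem_nabla A).mp hb).1
  rw [mem_nabla] at hmem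
  obtain ⟨_, c', hc', hcle⟩ := hmem
  obtain ⟨c, hc, rfl⟩ := Finset.mem_image.mp hc'
  have hci0 : shOne G i j c i = 0 := by
    have := hcle i; simpa [bswap] using this
  by_cases hcc : c i = 0 ∧ c j = 1 ∧ shVec i j c ∉ G
  · rw [shOne, if_pos hcc] at hci0; simp [shVec] at hci0
  · rw [shOne, if_neg hcc] at hci0 hcle
    have hcj : c j ≤ 1 := (hOk c hc).1 j
    rcases Nat.lt_or_ge (c j) 1 with h0 | h1
    · apply hnb
      rw [mem_nabla]
      refine ⟨hbox, c, hc, fun t => ?_⟩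
      by_cases hti : t = i
      · subst hti; omega
      · by_cases htj : t = j
        · subst htj; omega
        · have := hcle t; simpa [bswap, hti, htj] using this
    · have hcj1 : c j = 1 := le_antisymm hcj h1
      have hsh : shVec i j c ∈ G := by
        by_contra hx; exact hcc ⟨hci0, hcj1, hx⟩
      apply hnb
      rw [mem_nabla]
      refine ⟨hbox, shVec i j c, hsh, fun t => ?_⟩
      by_cases hti : t = i
      · subst hti; simpa [shVec] using hbi
      · by_cases htj : t = j
        · subst htj; simp [shVec, hti]
        · have := hcle t
          simp only [bswap, if_neg hti, if_neg htj] at this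
          simpa [shVec, hti, htj] using this

lemma nabla_shF_le {d : ℕ} {G : Finset (Fin m → ℕ)} {i j : Fin m} (hij : i ≠ j)
    (hn0 : 0 < (A i).card) (hnm : (A i).card ≤ (A j).card) (hOk : Ok d G) :
    (nablaX A ↑(shF G i j)).card ≤ (nablaX A ↑G).card := by
  classical
  apply Finset.card_le_card_of_injOn
    (fun b => if b ∈ nablaX A ↑G then b else bswap i j b)
  · intro b hb
    by_cases hbG : b ∈ nablaX A ↑G
    · simpa [hbG] using hbG
    · simpa [hbG] using key2 A hij hn0 hnm hOk b hb hbG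
  · intro b1 hb1 b2 hb2 heq
    simp only at heq
    by_cases m1 : b1 ∈ nablaX A ↑G <;> by_cases m2 : b2 ∈ nablaX A ↑G
    · simpa [m1, m2] using heq
    · exfalso
      rw [if_pos m1, if_neg m2] at heq
      exact key3 A hij hOk b2 hb2 m2 (heq ▸ hb1)
    · exfalso
      rw [if_neg m1, if_pos m2] at heq
      exact key3 A hij hOk b1 hb1 m1 (heq ▸ hb2)
    · rw [if_neg m1, if_neg m2] at heq
      obtain ⟨h1i, h1j, _⟩ := key1 A hij hOk b1 hb1 m1
      obtain ⟨h2i, h2j, _⟩ := key1 A hij hOk b2 hb2 m2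
      funext t
      by_cases hti : t = i
      · subst hti
        have := congrFun heq j
        simpa [bswap, hij.symm] using this
      · by_cases htj : t = j
        · subst htj; omega
        · have := congrFun heq t
          simpa [bswap, hti, htj] using this

lemma exists_shifted {d : ℕ} (hn2 : ∀ t, 2 ≤ (A t).card)
    (hmono : ∀ s t : Fin m, s ≤ t → (A s).card ≤ (A t).card) :
    ∀ N (G : Finset (Fin m → ℕ)), Ok d G → wtF G ≤ N →
    ∃ G' : Finset (Fin m → ℕ), IsShifted G' ∧ Ok d G' ∧ G'.card = G.card ∧
      (nablaX A ↑G').card ≤ (nablaX A ↑G).card := by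
  intro N
  induction N with
  | zero =>
    intro G hOk hw
    by_cases hS : IsShifted G
    · exact ⟨G, hS, hOk, rfl, le_refl _⟩
    · exfalso
      unfold IsShifted at hS; push_neg at hS
      obtain ⟨i, j, hij, a, ha, hai, haj, hnin⟩ := hS
      have := wtF_shF_lt hij ⟨a, ha, hai, haj, hnin⟩
      omega
  | succ N ih =>
    intro G hOk hw
    by_cases hS : IsShifted G
    · exact ⟨G, hS, hOk, rfl, le_refl _⟩
    · unfold IsShifted at hS; push_neg at hS
      obtain ⟨i, j, hij, a, ha, hai, haj, hnin⟩ := hS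
      have hlt := wtF_shF_lt hij ⟨a, ha, hai, haj, hnin⟩
      obtain ⟨G', h1, h2, h3, h4⟩ := ih (shF G i j) (ok_shF (ne_of_lt hij) hOk) (by omega)
      have h5 := nabla_shF_le A (ne_of_lt hij) (by have := hn2 i; omega)
        (hmono i j (le_of_lt hij)) hOk
      have h6 : G'.card = G.card := by rw [h3, card_shF]
      exact ⟨G', h1, h2, h6, le_trans h4 h5⟩

end Shadow
end ShadowAux

namespace ShadowAux
open Finset
variable {m : ℕ}

def supp (a : Fin m → ℕ) : Finset (Fin m) := univ.filter fun t => a t = 1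

lemma mem_supp {a : Fin m → ℕ} {t : Fin m} : t ∈ supp a ↔ a t = 1 := by simp [supp]

lemma card_supp {d : ℕ} {a : Fin m → ℕ} (h01 : ∀ t, a t ≤ 1) (hs : ∑ t, a t = d) :
    (supp a).card = d := by
  rw [supp, Finset.card_filter, ← hs]
  apply Finset.sum_congr rfl
  intro t _
  have := h01 t
  split_ifs with h <;> omega

lemma card_filter_lt {b : ℕ} (hb : b ≤ m) :
    ((univ : Finset (Fin m)).filter fun t => t.val < b).card = b := by
  have h : (univ : Finset (Fin m)).filter (fun t => t.val < b)
      = (univ : Finset (Fin b)).image (Fin.castLE hb) := by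
    ext t
    simp only [mem_filter, mem_univ, true_and, mem_image]
    constructor
    · intro ht
      refine ⟨⟨t.val, ht⟩, ?_⟩
      apply Fin.ext
      rfl
    · rintro ⟨k, rfl⟩
      exact k.isLt
  rw [h, Finset.card_image_of_injective _ (Fin.castLE_injective hb), card_univ, Fintype.card_fin]

lemma card_filter_lt1 {d : ℕ} (hd : d ≤ m + 1) :
    ((univ : Finset (Fin m)).filter fun t => t.val + 1 < d).card = d - 1 := by
  have h : ((univ : Finset (Fin m)).filter fun t => t.val + 1 < d)
      = (univ : Finset (Fin m)).filter fun t => t.val < d - 1 := by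
    apply Finset.filter_congr
    intro t _
    constructor <;> (intro h; omega)
  rw [h, card_filter_lt (by omega)]

lemma eq_sVec_of_supp {d : ℕ} {a : Fin m → ℕ} {j : Fin m} (h01 : ∀ t, a t ≤ 1)
    (h : supp a = insert j ((univ : Finset (Fin m)).filter fun t => t.val + 1 < d)) :
    a = sVec d j := by
  funext t
  have ht : a t = 1 ↔ (t = j ∨ t.val + 1 < d) := by
    rw [← mem_supp, h]
    simp
  unfold sVec
  by_cases hc : t.val + 1 < d ∨ t = j
  · rw [if_pos hc]
    exact ht.mpr hc.symm
  · rw [if_neg hc]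
    have h1 := h01 t
    have h2 : ¬ a t = 1 := fun hh => hc (Or.symm (ht.mp hh))
    omega

lemma sVec_self {d : ℕ} {j : Fin m} : sVec d j j = 1 := by simp [sVec]

lemma sVec_ok {d : ℕ} (hd : 1 ≤ d) {j : Fin m} (hj : d ≤ j.val + 1) :
    (∀ t, sVec d j t ≤ 1) ∧ ∑ t, sVec d j t = d := by
  constructor
  · intro t; unfold sVec; split_ifs <;> omega
  · have h1 : ∑ t, sVec d j t = ((univ : Finset (Fin m)).filter fun t => t.val + 1 < d ∨ t = j).card := by
      rw [Finset.card_filter]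
      refine Finset.sum_congr rfl fun t _ => ?_
      unfold sVec
      by_cases h : t.val + 1 < d ∨ t = j
      · rfl
      · rfl
    have h2 : ((univ : Finset (Fin m)).filter fun t => t.val + 1 < d ∨ t = j)
        = insert j ((univ : Finset (Fin m)).filter fun t => t.val + 1 < d) := by
      ext t
      simp only [mem_filter, mem_univ, true_and, mem_insert]
      tauto
    have hjm := j.isLt
    rw [h1, h2, Finset.card_insert_of_notMem, card_filter_lt1 (by omega)]
    · omega
    · simp only [mem_filter, mem_univ, true_and]
      omega

lemma exists_big_supp {d : ℕ} (hd : d ≤ m + 1) {a : Fin m → ℕ}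
    (h01 : ∀ t, a t ≤ 1) (hs : ∑ t, a t = d) (hd1 : 1 ≤ d) :
    ∃ t : Fin m, a t = 1 ∧ d ≤ t.val + 1 := by
  by_contra hc
  push_neg at hc
  have hsub : supp a ⊆ (univ : Finset (Fin m)).filter fun t => t.val + 1 < d := by
    intro t ht
    rw [mem_supp] at ht
    simp only [mem_filter, mem_univ, true_and]
    have := hc t ht
    omega
  have h1 := Finset.card_le_card hsub
  rw [card_supp h01 hs, card_filter_lt1 hd] at h1
  omega

lemma factA {d : ℕ} (hd : 1 ≤ d) {G : Finset (Fin m → ℕ)}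
    (hSh : IsShifted G) (hOk : Ok d G) :
    ∀ N (a : Fin m → ℕ), a ∈ G → ∀ j : Fin m, a j = 1 → d ≤ j.val + 1 → wt a ≤ N →
      sVec d j ∈ G := by
  intro N
  induction N using Nat.strong_induction_on with
  | _ N ih =>
  intro a ha j haj hj hw
  obtain ⟨h01, hsum⟩ := hOk a ha
  by_cases hz : ∃ z : Fin m, z.val + 1 < d ∧ a z = 0
  · obtain ⟨z, hz1, hz2⟩ := hz
    have hu : ∃ u : Fin m, a u = 1 ∧ ¬(u.val + 1 < d) ∧ u ≠ j := by
      by_contra hu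
      push_neg at hu
      have hsub : supp a ⊆ insert j (((univ : Finset (Fin m)).filter fun t => t.val + 1 < d).erase z) := by
        intro t ht
        rw [mem_supp] at ht
        by_cases htd : t.val + 1 < d
        · apply mem_insert_of_mem
          apply mem_erase.mpr
          constructor
          · intro hte; rw [hte] at ht; omega
          · simp only [mem_filter, mem_univ, true_and]; exact htd
        · exact mem_insert.mpr (Or.inl (hu t ht (by omega)))
      have hc1 := Finset.card_le_card hsub
      rw [card_supp h01 hsum] at hc1
      have hc2 : (insert j (((univ : Finset (Fin m)).filter fun t => t.val + 1 < d).erase z)).card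
          ≤ (((univ : Finset (Fin m)).filter fun t => t.val + 1 < d).erase z).card + 1 :=
        Finset.card_insert_le _ _
      have hc3 : (((univ : Finset (Fin m)).filter fun t => t.val + 1 < d).erase z).card
          = ((univ : Finset (Fin m)).filter fun t => t.val + 1 < d).card - 1 := by
        apply Finset.card_erase_of_mem
        simp only [mem_filter, mem_univ, true_and]
        exact hz1
      have hdm' : d ≤ m + 1 := by
        have := z.isLt; omega
      rw [hc3, card_filter_lt1 hdm'] at hc2
      omega
    obtain ⟨u, hu1, hu2, hu3⟩ := hu
    have hzu : z < u := by
      rw [Fin.lt_def]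
      omega
    have ha' : shVec z u a ∈ G := hSh z u hzu a ha hz2 hu1
    have haj' : shVec z u a j = 1 := by
      have hjz : j ≠ z := by
        intro hh; rw [hh] at hj; omega
      simp [shVec, hjz, hu3.symm, haj]
    have hwt := wt_shVec (ne_of_lt hzu) hz2 hu1
    have huz : z.val < u.val := hzu
    exact ih (wt (shVec z u a)) (by omega) (shVec z u a) ha' j haj' hj (le_refl _)
  · push_neg at hz
    have hsupp : supp a = insert j ((univ : Finset (Fin m)).filter fun t => t.val + 1 < d) := by
      apply Finset.eq_of_superset_of_card_ge
      · intro t ht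
        rw [mem_supp]
        rcases mem_insert.mp ht with h | h
        · rw [h]; exact haj
        · simp only [mem_filter, mem_univ, true_and] at h
          have := hz t h
          have := h01 t
          omega
      · rw [card_supp h01 hsum, Finset.card_insert_of_notMem, card_filter_lt1]
        · omega
        · have := j.isLt; omega
        · simp only [mem_filter, mem_univ, true_and]; omega
    have := eq_sVec_of_supp h01 hsupp
    rwa [this] at ha

lemma star_step {d : ℕ} {G : Finset (Fin m → ℕ)} (hSh : IsShifted G)
    {j j' : Fin m} (hj' : d ≤ j'.val + 1) (hlt : j' < j) (hin : sVec d j ∈ G) :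
    sVec d j' ∈ G := by
  have hne : j' ≠ j := ne_of_lt hlt
  have h1 : sVec d j j' = 0 := by
    simp only [sVec, ite_eq_right_iff]
    intro hh
    exfalso
    rcases hh with hh | hh
    · omega
    · exact hne hh
  have h2 : sVec d j j = 1 := sVec_self
  have h3 := hSh j' j hlt _ hin h1 h2
  have h4 : shVec j' j (sVec d j) = sVec d j' := by
    funext t
    by_cases ht1 : t = j'
    · subst ht1
      simp [shVec, sVec]
    · by_cases ht2 : t = j
      · subst ht2
        have hjd : ¬ (t.val + 1 < d) := by
          have : j'.val < t.val := hlt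
          omega
        simp [shVec, ht1, sVec, hjd]
      · simp only [shVec, if_neg ht1, if_neg ht2, sVec]
        have : (t.val + 1 < d ∨ t = j) ↔ (t.val + 1 < d ∨ t = j') := by
          constructor <;> (intro hh; rcases hh with hh | hh)
          · exact Or.inl hh
          · exact absurd hh ht2
          · exact Or.inl hh
          · exact absurd hh ht1
        rw [if_congr this rfl rfl]
  rwa [h4] at h3

end ShadowAux

namespace ShadowAux
open Finset
variable {m : ℕ}

lemma card_filter_Ico {a b : ℕ} (hab : a ≤ b) (hb : b ≤ m) :
    ((univ : Finset (Fin m)).filter fun t => a ≤ t.val ∧ t.val < b).card = b - a := by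
  have hdisj : Disjoint ((univ : Finset (Fin m)).filter fun t => t.val < a)
      ((univ : Finset (Fin m)).filter fun t => a ≤ t.val ∧ t.val < b) := by
    rw [Finset.disjoint_left]
    intro t ht1 ht2
    simp only [mem_filter, mem_univ, true_and] at ht1 ht2
    omega
  have hunion : ((univ : Finset (Fin m)).filter fun t => t.val < a)
      ∪ ((univ : Finset (Fin m)).filter fun t => a ≤ t.val ∧ t.val < b)
      = (univ : Finset (Fin m)).filter fun t => t.val < b := by
    ext t
    simp only [mem_union, mem_filter, mem_univ, true_and]
    omega
  have h1 := Finset.card_union_of_disjoint hdisj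
  rw [hunion, card_filter_lt hb, card_filter_lt (by omega)] at h1
  omega

lemma prod_le_prod_supp {K : Type*} (A : Fin m → Finset K)
    (hn2 : ∀ t, 2 ≤ (A t).card)
    (hmono : ∀ s t : Fin m, s ≤ t → (A s).card ≤ (A t).card) :
    ∀ (e : ℕ) (S : Finset (Fin m)), S.card = e →
      ∏ t ∈ (univ : Finset (Fin m)).filter (fun t => t.val + 1 < e), ((A t).card - 1)
        ≤ ∏ t ∈ S, ((A t).card - 1) := by
  intro e
  induction e with
  | zero =>
    intro S hS
    have h1 : ((univ : Finset (Fin m)).filter fun t => t.val + 1 < 0) = ∅ := by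
      apply Finset.filter_false_of_mem
      intro t _
      omega
    rw [h1, Finset.prod_empty]
    apply Finset.one_le_prod'
    intro t _
    have := hn2 t
    omega
  | succ e ih =>
    intro S hS
    have hne : S.Nonempty := by
      rw [← Finset.card_pos, hS]; omega
    set M := S.max' hne with hMdef
    have hM : M ∈ S := S.max'_mem hne
    have hS' : (S.erase M).card = e := by
      rw [Finset.card_erase_of_mem hM, hS]
      omega
    have hprod : ∏ t ∈ S, ((A t).card - 1)
        = ((A M).card - 1) * ∏ t ∈ S.erase M, ((A t).card - 1) :=
      (Finset.mul_prod_erase S _ hM).symm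
    -- M.val ≥ e
    have hMe : e ≤ M.val := by
      have hsub : S ⊆ (univ : Finset (Fin m)).filter fun t => t.val < M.val + 1 := by
        intro t ht
        simp only [mem_filter, mem_univ, true_and]
        have h2 : t.val ≤ M.val := S.le_max' t ht
        omega
      have := Finset.card_le_card hsub
      rw [hS, card_filter_lt (by have := M.isLt; omega)] at this
      omega
    by_cases he : e = 0
    · subst he
      have h1 : ((univ : Finset (Fin m)).filter fun t => t.val + 1 < 1) = ∅ := by
        apply Finset.filter_false_of_mem
        intro t _
        omega
      rw [h1, Finset.prod_empty]
      apply Finset.one_le_prod'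
      intro t _
      have := hn2 t
      omega
    · have hem : e - 1 < m := by
        have := M.isLt; omega
      have hsplit : ((univ : Finset (Fin m)).filter fun t => t.val + 1 < e + 1)
          = insert (⟨e - 1, hem⟩ : Fin m) ((univ : Finset (Fin m)).filter fun t => t.val + 1 < e) := by
        ext t
        simp only [mem_filter, mem_univ, true_and, mem_insert, Fin.ext_iff]
        omega
      rw [hsplit, Finset.prod_insert (by simp only [mem_filter, mem_univ, true_and]; omega)]
      rw [hprod]
      apply Nat.mul_le_mul
      · have hle : (⟨e - 1, hem⟩ : Fin m) ≤ M := by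
          rw [Fin.le_def]
          simp only
          omega
        have := hmono _ _ hle
        omega
      · exact ih (S.erase M) hS'

section Counting
variable {K : Type*} (A : Fin m → Finset K)

def C1 (d : ℕ) : Fin m → Finset ℕ :=
  fun t => if t.val + 1 < d then Finset.Ico 1 (A t).card else Finset.range (A t).card

def C1' (d w : ℕ) : Fin m → Finset ℕ :=
  fun t => if d ≤ t.val + 1 ∧ t.val + 1 ≤ w then ({0} : Finset ℕ) else C1 A d t

def C2 (a₀ : Fin m → ℕ) (j₀ : Fin m) : Fin m → Finset ℕ :=
  fun t => if a₀ t = 1 then Finset.Ico 1 (A t).card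
    else if t.val < j₀.val then ({0} : Finset ℕ) else Finset.range (A t).card

lemma T1_bound {d w : ℕ} {G : Finset (Fin m → ℕ)}
    (hn2 : ∀ t, 2 ≤ (A t).card)
    (hd : 1 ≤ d) (hdw : d ≤ w)
    (hstar : ∀ j : Fin m, d ≤ j.val + 1 → j.val + 1 ≤ w → sVec d j ∈ G) :
    ∃ T1 : Finset (Fin m → ℕ), T1 ⊆ nablaX A ↑G ∧
      (∀ b ∈ T1, ∀ z : Fin m, z.val + 1 < d → 1 ≤ b z) ∧
      (∏ t ∈ univ.filter (fun t : Fin m => t.val + 1 < d), ((A t).card - 1)) *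
          (∏ t ∈ univ.filter (fun t : Fin m => d ≤ t.val + 1), (A t).card)
        = T1.card +
          (∏ t ∈ univ.filter (fun t : Fin m => t.val + 1 < d), ((A t).card - 1)) *
            (∏ t ∈ univ.filter (fun t : Fin m => w + 1 ≤ t.val + 1), (A t).card) := by
  classical
  have hC1r : ∀ t, C1 A d t ⊆ Finset.range (A t).card := by
    intro t x hx
    unfold C1 at hx
    by_cases h : t.val + 1 < d
    · rw [if_pos h, Finset.mem_Ico] at hx
      rw [Finset.mem_range]
      omega
    · rwa [if_neg h] at hx
  have hC'r : ∀ t, C1' A d w t ⊆ C1 A d t := by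
    intro t x hx
    unfold C1' at hx
    by_cases h : d ≤ t.val + 1 ∧ t.val + 1 ≤ w
    · rw [if_pos h, Finset.mem_singleton] at hx
      subst hx
      unfold C1
      rw [if_neg (by omega : ¬ (t.val + 1 < d)), Finset.mem_range]
      have := hn2 t
      omega
    · rwa [if_neg h] at hx
  have hsub : Fintype.piFinset (C1' A d w) ⊆ Fintype.piFinset (C1 A d) := by
    intro b hb
    rw [Fintype.mem_piFinset] at hb ⊢
    exact fun t => hC'r t (hb t)
  refine ⟨Fintype.piFinset (C1 A d) \ Fintype.piFinset (C1' A d w), ?_, ?_, ?_⟩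
  · -- subset of shadow
    intro b hb
    rw [Finset.mem_sdiff] at hb
    obtain ⟨hb1, hb2⟩ := hb
    rw [Fintype.mem_piFinset] at hb1
    rw [mem_nabla]
    constructor
    · intro t
      have := hC1r t (hb1 t)
      rwa [Finset.mem_range] at this
    · have hex : ∃ t : Fin m, b t ∉ C1' A d w t := by
        by_contra hno
        push_neg at hno
        exact hb2 (Fintype.mem_piFinset.mpr hno)
      obtain ⟨t, ht⟩ := hex
      have hwin : d ≤ t.val + 1 ∧ t.val + 1 ≤ w := by
        by_contra hnw
        unfold C1' at ht
        rw [if_neg hnw] at ht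
        exact ht (hb1 t)
      have hbt : 1 ≤ b t := by
        unfold C1' at ht
        rw [if_pos hwin, Finset.mem_singleton] at ht
        omega
      refine ⟨sVec d t, hstar t hwin.1 hwin.2, fun s => ?_⟩
      unfold sVec
      by_cases hs : s.val + 1 < d ∨ s = t
      · rw [if_pos hs]
        rcases hs with hs | hs
        · have hbs := hb1 s
          unfold C1 at hbs
          rw [if_pos hs, Finset.mem_Ico] at hbs
          omega
        · subst hs
          exact hbt
      · rw [if_neg hs]
        omega
  · -- positivity at low coordinates
    intro b hb z hz
    rw [Finset.mem_sdiff] at hb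
    have hb1 := (Fintype.mem_piFinset.mp hb.1) z
    unfold C1 at hb1
    rw [if_pos hz, Finset.mem_Ico] at hb1
    omega
  · -- cardinality identity
    have hcard1 : (Fintype.piFinset (C1 A d)).card
        = (∏ t ∈ univ.filter (fun t : Fin m => t.val + 1 < d), ((A t).card - 1)) *
          (∏ t ∈ univ.filter (fun t : Fin m => d ≤ t.val + 1), (A t).card) := by
      rw [Fintype.card_piFinset]
      have h1 : ∀ t : Fin m, (C1 A d t).card
          = if t.val + 1 < d then (A t).card - 1 else (A t).card := by
        intro t
        unfold C1
        by_cases h : t.val + 1 < d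
        · rw [if_pos h, if_pos h, Nat.card_Ico]
        · rw [if_neg h, if_neg h, Finset.card_range]
      rw [Finset.prod_congr rfl (fun t _ => h1 t), Finset.prod_ite]
      have hfe : ((univ : Finset (Fin m)).filter fun x => ¬ x.val + 1 < d)
          = (univ : Finset (Fin m)).filter (fun t => d ≤ t.val + 1) := by
        apply Finset.filter_congr
        intro t _
        constructor <;> (intro h; omega)
      rw [hfe]
    have hcard2 : (Fintype.piFinset (C1' A d w)).card
        = (∏ t ∈ univ.filter (fun t : Fin m => t.val + 1 < d), ((A t).card - 1)) *
          (∏ t ∈ univ.filter (fun t : Fin m => w + 1 ≤ t.val + 1), (A t).card) := by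
      rw [Fintype.card_piFinset]
      have h1 : ∀ t : Fin m, (C1' A d w t).card
          = if d ≤ t.val + 1 ∧ t.val + 1 ≤ w then 1
            else if t.val + 1 < d then (A t).card - 1 else (A t).card := by
        intro t
        unfold C1' C1
        by_cases h : d ≤ t.val + 1 ∧ t.val + 1 ≤ w
        · rw [if_pos h, if_pos h, Finset.card_singleton]
        · rw [if_neg h, if_neg h]
          by_cases h2 : t.val + 1 < d
          · rw [if_pos h2, if_pos h2, Nat.card_Ico]
          · rw [if_neg h2, if_neg h2, Finset.card_range]
      rw [Finset.prod_congr rfl (fun t _ => h1 t), Finset.prod_ite]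
      rw [Finset.prod_const_one, one_mul, Finset.prod_ite,
        Finset.filter_filter, Finset.filter_filter]
      have hf1 : ((univ : Finset (Fin m)).filter fun x =>
            (¬ (d ≤ x.val + 1 ∧ x.val + 1 ≤ w)) ∧ x.val + 1 < d)
          = (univ : Finset (Fin m)).filter (fun t => t.val + 1 < d) := by
        apply Finset.filter_congr
        intro t _
        constructor
        · intro h; exact h.2
        · intro h; exact ⟨by omega, h⟩
      have hf2 : ((univ : Finset (Fin m)).filter fun x =>
            (¬ (d ≤ x.val + 1 ∧ x.val + 1 ≤ w)) ∧ ¬ x.val + 1 < d)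
          = (univ : Finset (Fin m)).filter (fun t => w + 1 ≤ t.val + 1) := by
        apply Finset.filter_congr
        intro t _
        constructor
        · intro h; omega
        · intro h; omega
      rw [hf1, hf2]
    have hle := Finset.card_le_card hsub
    rw [Finset.card_sdiff_of_subset hsub, hcard1, hcard2]
    rw [hcard1, hcard2] at hle
    omega

lemma T2_bound {d : ℕ} {G : Finset (Fin m → ℕ)}
    (hn2 : ∀ t, 2 ≤ (A t).card)
    {a₀ : Fin m → ℕ} (ha₀ : a₀ ∈ G) (h01 : ∀ t, a₀ t ≤ 1)
    {j₀ : Fin m} (hhigh : ∀ t : Fin m, j₀.val ≤ t.val → a₀ t = 0)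
    {z : Fin m} (hz : z.val + 1 < d) (hz0 : a₀ z = 0) (hzj : z.val < j₀.val) :
    ∃ T2 : Finset (Fin m → ℕ), T2 ⊆ nablaX A ↑G ∧
      (∀ b ∈ T2, b z = 0) ∧
      T2.card = (∏ t ∈ univ.filter (fun t : Fin m => a₀ t = 1), ((A t).card - 1)) *
        (∏ t ∈ univ.filter (fun t : Fin m => j₀.val + 1 ≤ t.val + 1), (A t).card) := by
  classical
  refine ⟨Fintype.piFinset (C2 A a₀ j₀), ?_, ?_, ?_⟩
  · intro b hb
    rw [Fintype.mem_piFinset] at hb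
    rw [mem_nabla]
    constructor
    · intro t
      have hbt := hb t
      unfold C2 at hbt
      by_cases h : a₀ t = 1
      · rw [if_pos h, Finset.mem_Ico] at hbt
        omega
      · rw [if_neg h] at hbt
        by_cases h2 : t.val < j₀.val
        · rw [if_pos h2, Finset.mem_singleton] at hbt
          have := hn2 t
          omega
        · rw [if_neg h2, Finset.mem_range] at hbt
          exact hbt
    · refine ⟨a₀, ha₀, fun t => ?_⟩
      have hbt := hb t
      unfold C2 at hbt
      by_cases h : a₀ t = 1
      · rw [if_pos h, Finset.mem_Ico] at hbt
        omega
      · have := h01 t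
        omega
  · intro b hb
    rw [Fintype.mem_piFinset] at hb
    have hbz := hb z
    unfold C2 at hbz
    rw [if_neg (by omega : ¬ a₀ z = 1), if_pos hzj, Finset.mem_singleton] at hbz
    exact hbz
  · rw [Fintype.card_piFinset]
    have h1 : ∀ t : Fin m, (C2 A a₀ j₀ t).card
        = if a₀ t = 1 then (A t).card - 1
          else if t.val < j₀.val then 1 else (A t).card := by
      intro t
      unfold C2
      by_cases h : a₀ t = 1
      · rw [if_pos h, if_pos h, Nat.card_Ico]
      · rw [if_neg h, if_neg h]
        by_cases h2 : t.val < j₀.val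
        · rw [if_pos h2, if_pos h2, Finset.card_singleton]
        · rw [if_neg h2, if_neg h2, Finset.card_range]
    rw [Finset.prod_congr rfl (fun t _ => h1 t), Finset.prod_ite]
    congr 1
    rw [Finset.prod_ite, Finset.prod_const_one, one_mul, Finset.filter_filter]
    have hf : ((univ : Finset (Fin m)).filter fun x => (¬ a₀ x = 1) ∧ ¬ x.val < j₀.val)
        = (univ : Finset (Fin m)).filter (fun t => j₀.val + 1 ≤ t.val + 1) := by
      apply Finset.filter_congr
      intro t _
      constructor
      · intro h; omega
      · intro h
        have h2 := hhigh t (by omega)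
        constructor
        · omega
        · omega
    rw [hf]

end Counting
end ShadowAux

namespace ShadowAux
open Finset
variable {m : ℕ}

theorem core {K : Type*} (A : Fin m → Finset K)
    (hn2 : ∀ t, 2 ≤ (A t).card)
    (hmono : ∀ s t : Fin m, s ≤ t → (A s).card ≤ (A t).card)
    {d r : ℕ} (hd : 1 ≤ d) (hdm : d ≤ m) (hr : 1 ≤ r) (hrm : d + r ≤ m + 1)
    (G : Finset (Fin m → ℕ)) (hOk : Ok d G) (hGc : G.card = r) :
    (∏ t ∈ univ.filter (fun t : Fin m => t.val + 1 < d), ((A t).card - 1)) *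
      ((∏ t ∈ univ.filter (fun t : Fin m => d ≤ t.val + 1), (A t).card) -
        (∏ t ∈ univ.filter (fun t : Fin m => d + r ≤ t.val + 1), (A t).card))
      ≤ (nablaX A ↑G).card := by
  classical
  obtain ⟨G', hSh, hOk', hcard', hle⟩ := exists_shifted A hn2 hmono (wtF G) G hOk (le_refl _)
  set P := ∏ t ∈ univ.filter (fun t : Fin m => t.val + 1 < d), ((A t).card - 1) with hP
  set Nd := ∏ t ∈ univ.filter (fun t : Fin m => d ≤ t.val + 1), (A t).card with hNd
  set Ndr := ∏ t ∈ univ.filter (fun t : Fin m => d + r ≤ t.val + 1), (A t).card with hNdr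
  suffices h : P * (Nd - Ndr) ≤ (nablaX A ↑G').card from le_trans h hle
  have hNN : Ndr ≤ Nd := by
    rw [hNd, hNdr]
    apply Finset.prod_le_prod_of_subset_of_one_le'
    · intro t ht
      simp only [mem_filter, mem_univ, true_and] at ht ⊢
      omega
    · intro t _ _
      have := hn2 t
      omega
  by_cases hA : ∀ j : Fin m, d ≤ j.val + 1 → j.val + 2 ≤ d + r → sVec d j ∈ G'
  · -- case A : full star present
    obtain ⟨T1, hT1sub, _, hT1eq⟩ := T1_bound A hn2 hd
      (show d ≤ d + r - 1 by omega)
      (fun j h1 h2 => hA j h1 (by omega))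
    rw [show d + r - 1 + 1 = d + r by omega] at hT1eq
    rw [← hP, ← hNd, ← hNdr] at hT1eq
    have h2 : P * (Nd - Ndr) + P * Ndr = P * Nd := by
      rw [← Nat.mul_add, Nat.sub_add_cancel hNN]
    have h3 := Finset.card_le_card hT1sub
    omega
  · -- case B
    push_neg at hA
    obtain ⟨j₁, hj₁a, hj₁b, hj₁c⟩ := hA
    set S := univ.filter (fun j : Fin m => d ≤ j.val + 1 ∧ j.val + 2 ≤ d + r ∧ sVec d j ∉ G')
      with hSdef
    have hSne : S.Nonempty := by
      refine ⟨j₁, ?_⟩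
      simp only [hSdef, mem_filter, mem_univ, true_and]
      exact ⟨hj₁a, hj₁b, hj₁c⟩
    set j₀ := S.min' hSne with hj₀def
    have hj₀S : j₀ ∈ S := S.min'_mem hSne
    simp only [hSdef, mem_filter, mem_univ, true_and] at hj₀S
    obtain ⟨hj₀1, hj₀2, hj₀3⟩ := hj₀S
    have hstarlow : ∀ j : Fin m, d ≤ j.val + 1 → j.val < j₀.val → sVec d j ∈ G' := by
      intro j hj1 hj2
      by_contra hjn
      have hjS : j ∈ S := by
        simp only [hSdef, mem_filter, mem_univ, true_and]
        exact ⟨hj1, by omega, hjn⟩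
      have hle2 : j₀ ≤ j := S.min'_le j hjS
      rw [Fin.le_def] at hle2
      omega
    have hB1 : ∀ a ∈ G', ∀ t : Fin m, j₀.val ≤ t.val → a t = 0 := by
      intro a ha t hjt
      by_contra h0
      have h1 : a t = 1 := by
        have := (hOk' a ha).1 t
        omega
      have h2 : d ≤ t.val + 1 := by omega
      have h3 : sVec d t ∈ G' := factA hd hSh hOk' (wt a) a ha t h1 h2 (le_refl _)
      rcases Nat.lt_or_ge j₀.val t.val with h4 | h4
      · exact hj₀3 (star_step hSh hj₀1 (show j₀ < t by rw [Fin.lt_def]; omega) h3)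
      · have h5 : j₀ = t := Fin.ext (by omega)
        exact hj₀3 (h5 ▸ h3)
    have hdj₀ : d ≤ j₀.val := by
      have hGne : G'.Nonempty := by
        rw [← Finset.card_pos, hcard', hGc]
        omega
      obtain ⟨a, ha⟩ := hGne
      obtain ⟨h01a, hsuma⟩ := hOk' a ha
      obtain ⟨t, ht1, ht2⟩ := exists_big_supp (by omega) h01a hsuma hd
      by_contra hcon
      push_neg at hcon
      have := hB1 a ha t (by omega)
      omega
    set stars := (univ.filter (fun j : Fin m => d ≤ j.val + 1 ∧ j.val < j₀.val)).image (sVec d)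
      with hstars
    have hstars_card : stars.card = j₀.val + 1 - d := by
      rw [hstars, Finset.card_image_of_injOn]
      · have hfe : (univ.filter (fun j : Fin m => d ≤ j.val + 1 ∧ j.val < j₀.val))
            = (univ.filter (fun j : Fin m => d - 1 ≤ j.val ∧ j.val < j₀.val)) := by
          apply Finset.filter_congr
          intro t _
          omega
        rw [hfe, card_filter_Ico (by omega) (by have := j₀.isLt; omega)]
        omega
      · intro x hx y hy hxy
        rw [Finset.mem_coe, mem_filter] at hx hy
        have h1 : sVec d y x = 1 := by
          rw [← hxy]
          exact sVec_self
        unfold sVec at h1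
        by_cases hc : x.val + 1 < d ∨ x = y
        · rcases hc with hc | hc
          · exfalso
            have := hx.2.1
            omega
          · exact hc
        · rw [if_neg hc] at h1
          omega
    have hstars_sub : stars ⊆ G' := by
      intro x hx
      rw [hstars, Finset.mem_image] at hx
      obtain ⟨j, hj, rfl⟩ := hx
      simp only [mem_filter, mem_univ, true_and] at hj
      exact hstarlow j hj.1 hj.2
    have hex_a₀ : ∃ a₀ ∈ G', a₀ ∉ stars := by
      by_contra hno
      push_neg at hno
      have hsub2 : G' ⊆ stars := fun a ha => hno a ha
      have := Finset.card_le_card hsub2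
      rw [hcard', hGc, hstars_card] at this
      omega
    obtain ⟨a₀, ha₀G, ha₀n⟩ := hex_a₀
    obtain ⟨h01, hsum⟩ := hOk' a₀ ha₀G
    have hzex : ∃ z : Fin m, z.val + 1 < d ∧ a₀ z = 0 := by
      by_contra hno
      push_neg at hno
      obtain ⟨t, ht1, ht2⟩ := exists_big_supp (by omega) h01 hsum hd
      have hsupp : supp a₀ = insert t ((univ : Finset (Fin m)).filter fun s : Fin m => s.val + 1 < d) := by
        apply Finset.eq_of_superset_of_card_ge
        · intro s hs
          rw [mem_supp]
          rcases mem_insert.mp hs with h | h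
          · rw [h]; exact ht1
          · simp only [mem_filter, mem_univ, true_and] at h
            have h5 := hno s h
            have h6 := h01 s
            omega
        · rw [card_supp h01 hsum, Finset.card_insert_of_notMem, card_filter_lt1 (by omega)]
          · omega
          · simp only [mem_filter, mem_univ, true_and]
            omega
      have heq := eq_sVec_of_supp h01 hsupp
      have htj : t.val < j₀.val := by
        by_contra hcon2
        push_neg at hcon2
        have := hB1 a₀ ha₀G t hcon2
        omega
      apply ha₀n
      rw [hstars, Finset.mem_image]
      refine ⟨t, ?_, heq.symm⟩
      simp only [mem_filter, mem_univ, true_and]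
      exact ⟨ht2, htj⟩
    obtain ⟨z, hz1, hz2⟩ := hzex
    obtain ⟨T1, hT1sub, hT1pos, hT1eq⟩ := T1_bound A hn2 hd (w := j₀.val) hdj₀
      (fun j h1 h2 => hstarlow j h1 (by omega))
    rw [← hP, ← hNd] at hT1eq
    obtain ⟨T2, hT2sub, hT2z, hT2card⟩ := T2_bound A hn2 ha₀G h01
      (fun t ht => hB1 a₀ ha₀G t ht) hz1 hz2 (by omega)
    have hSa : P ≤ ∏ t ∈ univ.filter (fun t : Fin m => a₀ t = 1), ((A t).card - 1) := by
      have h5 := prod_le_prod_supp A hn2 hmono d (supp a₀) (card_supp h01 hsum)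
      simp only [supp] at h5
      rw [hP]
      exact h5
    have hdisj : Disjoint T1 T2 := by
      rw [Finset.disjoint_left]
      intro b hb1 hb2
      have hp1 := hT1pos b hb1 z hz1
      have hp2 := hT2z b hb2
      omega
    have hU : T1 ∪ T2 ⊆ nablaX A ↑G' := Finset.union_subset hT1sub hT2sub
    have hcardU := Finset.card_le_card hU
    rw [Finset.card_union_of_disjoint hdisj] at hcardU
    have h6 : P * (∏ t ∈ univ.filter (fun t : Fin m => j₀.val + 1 ≤ t.val + 1), (A t).card)
        ≤ T2.card := by
      rw [hT2card]
      exact Nat.mul_le_mul hSa (le_refl _)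
    have h7 : P * (Nd - Ndr) ≤ P * Nd := Nat.mul_le_mul (le_refl P) (Nat.sub_le _ _)
    omega

end ShadowAux

open Finset in
lemma prod_Icc_nval {K : Type*} {m : ℕ} (A : Fin m → Finset K) (f : ℕ → ℕ) {a b : ℕ}
    (ha : 1 ≤ a) (hb : b ≤ m) :
    (∏ k ∈ Finset.Icc a b, f (nval A k))
      = ∏ t ∈ Finset.univ.filter (fun t : Fin m => a ≤ t.val + 1 ∧ t.val + 1 ≤ b),
          f ((A t).card) := by
  have hnv : ∀ (k : ℕ) (h1 : 1 ≤ k) (h2 : k ≤ m) (hkm : k - 1 < m),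
      nval A k = (A ⟨k - 1, hkm⟩).card := by
    intro k h1 h2 hkm
    unfold nval
    rw [dif_pos ⟨h1, h2⟩]
  refine Finset.prod_bij'
    (fun k hk => (⟨k - 1, by rw [Finset.mem_Icc] at hk; omega⟩ : Fin m))
    (fun t ht => t.val + 1) ?_ ?_ ?_ ?_ ?_
  · intro k hk
    rw [Finset.mem_Icc] at hk
    simp only [Finset.mem_filter, Finset.mem_univ, true_and]
    omega
  · intro t ht
    simp only [Finset.mem_filter, Finset.mem_univ, true_and] at ht
    rw [Finset.mem_Icc]
    omega
  · intro k hk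
    dsimp only
    rw [Finset.mem_Icc] at hk
    omega
  · intro t ht
    apply Fin.ext
    simp only [Fin.val_mk]
    omega
  · intro k hk
    rw [Finset.mem_Icc] at hk
    congr 1
    exact hnv k (by omega) (by omega) _


/-- Let `1 ≤ d ≤ m`, `1 ≤ r ≤ m+1−d`, and assume the growth condition
`n_{d+r−1}·n_{d−1}·(n_i+n_j−1) ≤ n_i·n_j·(n_{d+r−1}+n_{d−1}−1)` for all
`d ≤ i < j ≤ d+r−2`. Then every `M ⊆ S_d(m)` with `|M| = r` satisfies
`|∇_X(M)| ≥ ∏_{i=1}^{d−1}(n_i−1) · ∏_{i=d+r}^{m} n_i · (∏_{i=d}^{d+r−1} n_i − 1)`. -/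
theorem shadow_card_lower_bound
    {F : Type*} [Field F] [Fintype F] [DecidableEq F] {m d r : ℕ}
    (A : Fin m → Finset F)
    (hcard : ∀ i, 2 ≤ (A i).card)
    (hmono : ∀ i j : Fin m, i ≤ j → (A i).card ≤ (A j).card)
    (hd1 : 1 ≤ d) (hdm : d ≤ m) (hr1 : 1 ≤ r) (hr2 : r ≤ m + 1 - d)
    (hcond : ∀ i j : ℕ, d ≤ i → i < j → j ≤ d + r - 2 →
      nval A (d + r - 1) * nval A (d - 1) * (nval A i + nval A j - 1) ≤
        nval A i * nval A j * (nval A (d + r - 1) + nval A (d - 1) - 1))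
    (M : Finset (Fin m → ℕ)) (hM : ↑M ⊆ Sd m d) (hMcard : M.card = r) :
    (∏ i ∈ Finset.Icc 1 (d - 1), (nval A i - 1)) *
        (∏ i ∈ Finset.Icc (d + r) m, nval A i) *
        ((∏ i ∈ Finset.Icc d (d + r - 1), nval A i) - 1) ≤
      (nablaX A ↑M).card := by
  classical
  have hOk : ShadowAux.Ok d M := by
    intro a ha
    exact hM (Finset.mem_coe.mpr ha)
  have hrm : d + r ≤ m + 1 := by omega
  have hcore := ShadowAux.core A hcard hmono hd1 hdm hr1 hrm M hOk hMcard
  set P := ∏ t ∈ Finset.univ.filter (fun t : Fin m => t.val + 1 < d), ((A t).card - 1) with hP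
  set Nd := ∏ t ∈ Finset.univ.filter (fun t : Fin m => d ≤ t.val + 1), (A t).card with hNd
  set Ndr := ∏ t ∈ Finset.univ.filter (fun t : Fin m => d + r ≤ t.val + 1), (A t).card with hNdr
  refine le_trans (le_of_eq ?_) hcore
  have e1 : (∏ i ∈ Finset.Icc 1 (d - 1), (nval A i - 1)) = P := by
    rw [prod_Icc_nval A (fun x => x - 1) (le_refl 1) (by omega), hP]
    have hfe : (Finset.univ.filter (fun t : Fin m => 1 ≤ t.val + 1 ∧ t.val + 1 ≤ d - 1))
        = Finset.univ.filter (fun t : Fin m => t.val + 1 < d) := by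
      apply Finset.filter_congr
      intro t _
      omega
    rw [hfe]
  have e2 : (∏ i ∈ Finset.Icc (d + r) m, nval A i) = Ndr := by
    rw [prod_Icc_nval A (fun x => x) (by omega) (le_refl m), hNdr]
    have hfe : (Finset.univ.filter (fun t : Fin m => d + r ≤ t.val + 1 ∧ t.val + 1 ≤ m))
        = Finset.univ.filter (fun t : Fin m => d + r ≤ t.val + 1) := by
      apply Finset.filter_congr
      intro t _
      have := t.isLt
      omega
    rw [hfe]
  have e5 := Finset.prod_filter_mul_prod_filter_not
    (Finset.univ.filter (fun t : Fin m => d ≤ t.val + 1))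
    (fun t => t.val + 1 ≤ d + r - 1) (fun t => (A t).card)
  rw [Finset.filter_filter, Finset.filter_filter] at e5
  have hf2 : (Finset.univ.filter fun t : Fin m => (d ≤ t.val + 1) ∧ ¬ t.val + 1 ≤ d + r - 1)
      = Finset.univ.filter (fun t : Fin m => d + r ≤ t.val + 1) := by
    apply Finset.filter_congr
    intro t _
    omega
  rw [hf2, ← hNd, ← hNdr] at e5
  have e3 : Nd = (∏ i ∈ Finset.Icc d (d + r - 1), nval A i) * Ndr := by
    rw [prod_Icc_nval A (fun x => x) (by omega) (by omega)]
    exact e5.symm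
  have e4 : Nd - Ndr = ((∏ i ∈ Finset.Icc d (d + r - 1), nval A i) - 1) * Ndr := by
    rw [e3, Nat.sub_mul, one_mul]
  rw [e1, e2, e4, mul_assoc, mul_comm Ndr]
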